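/- arXiv:2410.06771 — 4 statements merged into one kernel-verified Lean document; each statement's English description precedes it below -/
import Mathlib

section
/- Let (Ω, μ) be a probability space, let Y : Ω → ℝ be measurable, let ε ∈ (0,1), and let N ≥ 1 be a natural number. Then, with respect to the N-fold product measure μ^⊗N on samples (x₁, …, x_N), the probability of the event that μ{ x ∈ Ω : Y(x) > max_{1≤i≤N} Y(x_i) } > ε is at most (1 − ε)^N. (One-sided scenario bound underlying the Monte Carlo reachable-set estimate: the sampled maximum is, with high probability, exceeded only on a set of measure at most ε.) -/
open MeasureTheory Real

/-- One-sided scenario bound: the sampled maximum of a scalar quantity is, with probability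
at least `1 - (1-ε)^N` over the i.i.d. samples, exceeded only on a set of measure at most ε. -/
theorem scenario_one_sided_max_bound
    {Ω : Type*} [MeasurableSpace Ω] (μ : Measure Ω) [IsProbabilityMeasure μ]
    (Y : Ω → ℝ) (hY : Measurable Y)
    (ε : ℝ) (hε : ε ∈ Set.Ioo (0 : ℝ) 1) (N : ℕ) (hN : 1 ≤ N) :
    Measure.pi (fun _ : Fin N => μ)
      { xs : Fin N → Ω |
        ENNReal.ofReal ε < μ { x : Ω | Y x > ⨆ i : Fin N, Y (xs i) } } ≤
    ENNReal.ofReal ((1 - ε) ^ N) := by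
  obtain ⟨hε0, hε1⟩ := hε
  set F : ℝ → ENNReal := fun t => μ { x : Ω | Y x > t } with hF
  have Fanti : ∀ {s t : ℝ}, s ≤ t → F t ≤ F s := fun {s t} hst =>
    measure_mono fun x hx => lt_of_le_of_lt hst hx
  set S : Set ℝ := { t | F t ≤ ENNReal.ofReal ε } with hS
  -- S is nonempty
  have hne : S.Nonempty := by
    have hempty : (⋂ n : ℕ, { x : Ω | Y x > (n : ℝ) }) = ∅ := by
      ext x
      simp only [Set.mem_iInter, Set.mem_setOf_eq, Set.mem_empty_iff_false, iff_false, not_forall]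
      obtain ⟨n, hn⟩ := exists_nat_gt (Y x)
      exact ⟨n, not_lt.2 hn.le⟩
    have htend : Filter.Tendsto (fun n : ℕ => F (n : ℝ)) Filter.atTop (nhds 0) := by
      have := tendsto_measure_iInter_atTop (μ := μ)
        (s := fun n : ℕ => { x : Ω | Y x > (n : ℝ) })
        (fun n => (hY measurableSet_Ioi).nullMeasurableSet)
        (fun n m hnm x hx => by
          simp only [Set.mem_setOf_eq] at hx ⊢
          exact lt_of_le_of_lt (by exact_mod_cast hnm) hx)
        ⟨0, measure_ne_top μ _⟩
      rwa [hempty, measure_empty] at this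
    have : ∀ᶠ n : ℕ in Filter.atTop, F (n : ℝ) < ENNReal.ofReal ε :=
      htend.eventually_lt_const (by simpa using hε0)
    obtain ⟨n, hn⟩ := this.exists
    exact ⟨n, hn.le⟩
  -- S is bounded below
  have hbdd : BddBelow S := by
    have huniv : (⋃ n : ℕ, { x : Ω | Y x > -(n : ℝ) }) = Set.univ := by
      ext x
      simp only [Set.mem_iUnion, Set.mem_setOf_eq, Set.mem_univ, iff_true]
      obtain ⟨n, hn⟩ := exists_nat_gt (-Y x)
      exact ⟨n, by linarith⟩
    have htend : Filter.Tendsto (fun n : ℕ => F (-(n : ℝ))) Filter.atTop (nhds 1) := by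
      have := tendsto_measure_iUnion_atTop (μ := μ)
        (s := fun n : ℕ => { x : Ω | Y x > -(n : ℝ) })
        (fun n m hnm x hx => by
          simp only [Set.mem_setOf_eq] at hx ⊢
          refine lt_of_le_of_lt (neg_le_neg ?_) hx
          exact_mod_cast hnm)
      rwa [huniv, measure_univ] at this
    have : ∀ᶠ n : ℕ in Filter.atTop, ENNReal.ofReal ε < F (-(n : ℝ)) :=
      htend.eventually_const_lt (ENNReal.ofReal_lt_one.2 hε1)
    obtain ⟨n, hn⟩ := this.exists
    refine ⟨-(n : ℝ), fun s hs => ?_⟩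
    by_contra h
    push_neg at h
    exact absurd (le_trans (Fanti h.le) hs) (not_le.2 hn)
  set q : ℝ := sInf S with hq
  have hSup : ∀ {s t : ℝ}, s ∈ S → s ≤ t → t ∈ S := fun {s t} hs hst =>
    le_trans (Fanti hst) hs
  -- q ∈ S
  have hqS : q ∈ S := by
    have hunion : { x : Ω | Y x > q } = ⋃ n : ℕ, { x : Ω | Y x > q + 1 / (n + 1 : ℝ) } := by
      ext x
      simp only [Set.mem_iUnion, Set.mem_setOf_eq]
      constructor
      · intro hx
        obtain ⟨n, hn⟩ := exists_nat_one_div_lt (show (0:ℝ) < Y x - q by linarith)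
        exact ⟨n, by push_cast at hn ⊢; linarith⟩
      · rintro ⟨n, hn⟩
        have : (0:ℝ) < 1 / (n + 1 : ℝ) := by positivity
        linarith
    have hterm : ∀ n : ℕ, F (q + 1 / (n + 1 : ℝ)) ≤ ENNReal.ofReal ε := by
      intro n
      have hpos : (0:ℝ) < 1 / (n + 1 : ℝ) := by positivity
      obtain ⟨s, hsS, hs⟩ := Real.lt_sInf_add_pos hne hpos
      exact hSup hsS (by rw [← hq] at hs; linarith)
    have hmono : Monotone fun n : ℕ => { x : Ω | Y x > q + 1 / (n + 1 : ℝ) } := by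
      intro n m hnm x hx
      have h1 : 1 / (m + 1 : ℝ) ≤ 1 / (n + 1 : ℝ) := by
        apply one_div_le_one_div_of_le (by positivity)
        push_cast; linarith [(Nat.cast_le (α := ℝ)).2 hnm]
      simp only [Set.mem_setOf_eq] at hx ⊢
      linarith
    have htend := tendsto_measure_iUnion_atTop (μ := μ) hmono
    show F q ≤ ENNReal.ofReal ε
    show μ { x : Ω | Y x > q } ≤ ENNReal.ofReal ε
    rw [hunion]
    exact le_of_tendsto' htend hterm
  -- μ {Y ≥ q} ≥ ε
  have hge : ENNReal.ofReal ε ≤ μ { x : Ω | q ≤ Y x } := by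
    have hinter : { x : Ω | q ≤ Y x } = ⋂ n : ℕ, { x : Ω | Y x > q - 1 / (n + 1 : ℝ) } := by
      ext x
      simp only [Set.mem_iInter, Set.mem_setOf_eq]
      constructor
      · intro hx n
        have : (0:ℝ) < 1 / (n + 1 : ℝ) := by positivity
        linarith
      · intro h
        by_contra hlt
        push_neg at hlt
        obtain ⟨n, hn⟩ := exists_nat_one_div_lt (show (0:ℝ) < q - Y x by linarith)
        have := h n
        push_cast at hn
        linarith
    have hterm : ∀ n : ℕ, ENNReal.ofReal ε ≤ F (q - 1 / (n + 1 : ℝ)) := by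
      intro n
      by_contra h
      push_neg at h
      have hmem : q - 1 / (n + 1 : ℝ) ∈ S := h.le
      have : q ≤ q - 1 / (n + 1 : ℝ) := csInf_le hbdd hmem
      have hpos : (0:ℝ) < 1 / (n + 1 : ℝ) := by positivity
      linarith
    have hanti : Antitone fun n : ℕ => { x : Ω | Y x > q - 1 / (n + 1 : ℝ) } := by
      intro n m hnm x hx
      have h1 : 1 / (m + 1 : ℝ) ≤ 1 / (n + 1 : ℝ) := by
        apply one_div_le_one_div_of_le (by positivity)
        push_cast; linarith [(Nat.cast_le (α := ℝ)).2 hnm]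
      simp only [Set.mem_setOf_eq] at hx ⊢
      linarith
    have htend := tendsto_measure_iInter_atTop (μ := μ)
      (fun n => (hY measurableSet_Ioi).nullMeasurableSet) hanti ⟨0, measure_ne_top μ _⟩
    rw [hinter]
    exact ge_of_tendsto' htend hterm
  -- μ {Y < q} ≤ 1 - ε
  have hlt : μ { x : Ω | Y x < q } ≤ ENNReal.ofReal (1 - ε) := by
    have hcompl : { x : Ω | Y x < q } = { x : Ω | q ≤ Y x }ᶜ := by
      ext x; simp [not_le]
    have h1 := measure_compl (μ := μ) (s := { x : Ω | q ≤ Y x })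
      (hY measurableSet_Ici) (measure_ne_top μ _)
    rw [hcompl, h1]
    rw [measure_univ, ENNReal.ofReal_sub _ hε0.le, ENNReal.ofReal_one]
    exact tsub_le_tsub_left hge 1
  -- event inclusion
  have hsub : { xs : Fin N → Ω |
      ENNReal.ofReal ε < μ { x : Ω | Y x > ⨆ i : Fin N, Y (xs i) } } ⊆
      Set.pi Set.univ (fun _ : Fin N => { x : Ω | Y x < q }) := by
    intro xs hxs
    have hN' : Nonempty (Fin N) := ⟨⟨0, hN⟩⟩
    have hsupq : (⨆ i : Fin N, Y (xs i)) < q := by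
      by_contra h
      push_neg at h
      have hin := hSup hqS h
      simp only [hS, Set.mem_setOf_eq, hF] at hin
      exact absurd hin (not_le.2 hxs)
    intro i _
    exact lt_of_le_of_lt (le_ciSup (Set.Finite.bddAbove (Set.finite_range _)) i) hsupq
  calc Measure.pi (fun _ : Fin N => μ)
        { xs : Fin N → Ω | ENNReal.ofReal ε < μ { x : Ω | Y x > ⨆ i : Fin N, Y (xs i) } }
      ≤ Measure.pi (fun _ : Fin N => μ)
        (Set.pi Set.univ (fun _ : Fin N => { x : Ω | Y x < q })) := measure_mono hsub
    _ = ∏ _i : Fin N, μ { x : Ω | Y x < q } := Measure.pi_pi _ _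
    _ = μ { x : Ω | Y x < q } ^ N := by simp
    _ ≤ ENNReal.ofReal (1 - ε) ^ N := pow_le_pow_left' hlt N
    _ = ENNReal.ofReal ((1 - ε) ^ N) := (ENNReal.ofReal_pow (by linarith) N).symm
end

section
/- Let (Ω, μ) be a probability space, let Y : Ω → ℝ be measurable, let ε ∈ (0,1), and let N ≥ 1 be a natural number. Then, with respect to the N-fold product measure μ^⊗N on samples (x₁, …, x_N), the probability of the event that μ{ x ∈ Ω : Y(x) ∉ [min_{1≤i≤N} Y(x_i), max_{1≤i≤N} Y(x_i)] } > ε is at most 2·(1 − ε/2)^N. (Two-sided scenario bound: the sampled interval hull of a scalar quantity fails to ε-cover its distribution with probability at most 2(1 − ε/2)^N.) -/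
open MeasureTheory Real Set ENNReal

lemma aux_one_sided
    {Ω : Type*} [MeasurableSpace Ω] (μ : Measure Ω) [IsProbabilityMeasure μ]
    (Y : Ω → ℝ) (hY : Measurable Y)
    (p : ℝ) (hp0 : 0 < p) (hp1 : p < 1) (N : ℕ) (hN : 1 ≤ N) :
    Measure.pi (fun _ : Fin N => μ)
      { xs : Fin N → Ω | ENNReal.ofReal p < μ { x : Ω | Y x < ⨅ i : Fin N, Y (xs i) } } ≤
    ENNReal.ofReal ((1 - p) ^ N) := by
  classical
  haveI : Nonempty (Fin N) := ⟨⟨0, hN⟩⟩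
  set S : Set ℝ := {t : ℝ | ENNReal.ofReal p ≤ μ {x : Ω | Y x ≤ t}} with hSdef
  have hSmono : ∀ {s t : ℝ}, s ∈ S → s ≤ t → t ∈ S := by
    intro s t hs hst
    exact hs.trans (measure_mono (fun x hx => le_trans hx hst))
  -- S is nonempty
  have hSne : S.Nonempty := by
    have hmono : Monotone (fun n : ℕ => {x : Ω | Y x ≤ (n : ℝ)}) := by
      intro a b hab x hx
      simp only [Set.mem_setOf_eq] at hx ⊢
      exact le_trans hx (by exact_mod_cast hab)
    have hU : (⋃ n : ℕ, {x : Ω | Y x ≤ (n : ℝ)}) = Set.univ := by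
      ext x
      simp only [Set.mem_iUnion, Set.mem_univ, iff_true, Set.mem_setOf_eq]
      obtain ⟨n, hn⟩ := exists_nat_ge (Y x)
      exact ⟨n, hn⟩
    have h1 : μ (⋃ n : ℕ, {x : Ω | Y x ≤ (n : ℝ)}) = ⨆ n : ℕ, μ {x : Ω | Y x ≤ (n : ℝ)} :=
      hmono.measure_iUnion
    have : ENNReal.ofReal p < ⨆ n : ℕ, μ {x : Ω | Y x ≤ (n : ℝ)} := by
      rw [← h1, hU, measure_univ]
      exact ENNReal.ofReal_lt_one.mpr hp1
    obtain ⟨n, hn⟩ := lt_iSup_iff.mp this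
    exact ⟨n, hn.le⟩
  -- S is bounded below
  have hSbdd : BddBelow S := by
    have hanti : Antitone (fun n : ℕ => {x : Ω | Y x ≤ -(n : ℝ)}) := by
      intro a b hab x hx
      simp only [Set.mem_setOf_eq] at hx ⊢
      have : (a:ℝ) ≤ (b:ℝ) := by exact_mod_cast hab
      linarith
    have hI : (⋂ n : ℕ, {x : Ω | Y x ≤ -(n : ℝ)}) = ∅ := by
      ext x
      simp only [Set.mem_iInter, Set.mem_empty_iff_false, iff_false, Set.mem_setOf_eq, not_forall]
      obtain ⟨n, hn⟩ := exists_nat_gt (-Y x)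
      exact ⟨n, by push_neg; linarith⟩
    have h1 : μ (⋂ n : ℕ, {x : Ω | Y x ≤ -(n : ℝ)}) = ⨅ n : ℕ, μ {x : Ω | Y x ≤ -(n : ℝ)} :=
      hanti.measure_iInter (fun n => (hY measurableSet_Iic).nullMeasurableSet)
        ⟨0, measure_ne_top μ _⟩
    have h2 : (⨅ n : ℕ, μ {x : Ω | Y x ≤ -(n : ℝ)}) < ENNReal.ofReal p := by
      rw [← h1, hI, measure_empty]
      exact ENNReal.ofReal_pos.mpr hp0
    obtain ⟨n, hn⟩ := iInf_lt_iff.mp h2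
    refine ⟨-(n : ℝ), fun s hs => ?_⟩
    by_contra hcon
    push_neg at hcon
    exact absurd (hSmono hs hcon.le) (not_le.mpr hn)
  set q : ℝ := sInf S with hq
  -- μ {Y ≤ q} ≥ ofReal p
  have hq_ge : ENNReal.ofReal p ≤ μ {x : Ω | Y x ≤ q} := by
    have hanti : Antitone (fun n : ℕ => {x : Ω | Y x ≤ q + 1 / ((n : ℝ) + 1)}) := by
      intro a b hab x hx
      simp only [Set.mem_setOf_eq] at hx ⊢
      have : 1 / ((b : ℝ) + 1) ≤ 1 / ((a : ℝ) + 1) := by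
        gcongr
      linarith
    have hI : (⋂ n : ℕ, {x : Ω | Y x ≤ q + 1 / ((n : ℝ) + 1)}) = {x : Ω | Y x ≤ q} := by
      ext x
      simp only [Set.mem_iInter, Set.mem_setOf_eq]
      constructor
      · intro h
        by_contra hcon
        push_neg at hcon
        obtain ⟨n, hn⟩ := exists_nat_one_div_lt (sub_pos.mpr hcon)
        have := h n
        linarith
      · intro h n
        have : (0:ℝ) < 1 / ((n : ℝ) + 1) := by positivity
        linarith
    have h1 : μ (⋂ n : ℕ, {x : Ω | Y x ≤ q + 1 / ((n : ℝ) + 1)}) =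
        ⨅ n : ℕ, μ {x : Ω | Y x ≤ q + 1 / ((n : ℝ) + 1)} :=
      hanti.measure_iInter (fun n => (hY measurableSet_Iic).nullMeasurableSet)
        ⟨0, measure_ne_top μ _⟩
    rw [← hI, h1]
    refine le_iInf fun n => ?_
    have hpos : (0:ℝ) < 1 / ((n : ℝ) + 1) := by positivity
    obtain ⟨s, hsS, hs⟩ := Real.lt_sInf_add_pos hSne hpos
    exact hSmono hsS (by rw [← hq] at hs; linarith)
  -- key bound on the tail
  have htail : μ {x : Ω | q < Y x} ≤ ENNReal.ofReal (1 - p) := by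
    have hc : {x : Ω | q < Y x} = {x : Ω | Y x ≤ q}ᶜ := by
      ext x; simp [not_le]
    have hms : MeasurableSet {x : Ω | Y x ≤ q} := measurableSet_le hY measurable_const
    rw [hc, prob_compl_eq_one_sub hms]
    calc (1 : ℝ≥0∞) - μ {x : Ω | Y x ≤ q} ≤ 1 - ENNReal.ofReal p :=
          tsub_le_tsub_left hq_ge 1
      _ = ENNReal.ofReal (1 - p) := by
          rw [ENNReal.ofReal_sub 1 hp0.le, ENNReal.ofReal_one]
  -- inclusion of the event in the product tail set
  have hincl : { xs : Fin N → Ω | ENNReal.ofReal p < μ { x : Ω | Y x < ⨅ i : Fin N, Y (xs i) } }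
      ⊆ Set.pi Set.univ (fun _ : Fin N => {x : Ω | q < Y x}) := by
    intro xs hxs
    simp only [Set.mem_setOf_eq] at hxs
    set m : ℝ := ⨅ i : Fin N, Y (xs i) with hm
    -- find t < m with t ∈ S
    have hmono : Monotone (fun n : ℕ => {x : Ω | Y x ≤ m - 1 / ((n : ℝ) + 1)}) := by
      intro a b hab x hx
      simp only [Set.mem_setOf_eq] at hx ⊢
      have : 1 / ((b : ℝ) + 1) ≤ 1 / ((a : ℝ) + 1) := by
        gcongr
      linarith
    have hU : (⋃ n : ℕ, {x : Ω | Y x ≤ m - 1 / ((n : ℝ) + 1)}) = {x : Ω | Y x < m} := by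
      ext x
      simp only [Set.mem_iUnion, Set.mem_setOf_eq]
      constructor
      · rintro ⟨n, hn⟩
        have : (0:ℝ) < 1 / ((n : ℝ) + 1) := by positivity
        linarith
      · intro h
        obtain ⟨n, hn⟩ := exists_nat_one_div_lt (sub_pos.mpr h)
        exact ⟨n, by linarith⟩
    have h1 : μ {x : Ω | Y x < m} = ⨆ n : ℕ, μ {x : Ω | Y x ≤ m - 1 / ((n : ℝ) + 1)} := by
      rw [← hU]; exact hmono.measure_iUnion
    rw [h1] at hxs
    obtain ⟨n, hn⟩ := lt_iSup_iff.mp hxs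
    have htS : m - 1 / ((n : ℝ) + 1) ∈ S := hn.le
    have hqlt : q < m := by
      have : q ≤ m - 1 / ((n : ℝ) + 1) := csInf_le hSbdd htS
      have hpos : (0:ℝ) < 1 / ((n : ℝ) + 1) := by positivity
      linarith
    intro i _
    have : m ≤ Y (xs i) := ciInf_le (Finite.bddBelow_range _) i
    exact lt_of_lt_of_le hqlt this
  calc Measure.pi (fun _ : Fin N => μ)
        { xs : Fin N → Ω | ENNReal.ofReal p < μ { x : Ω | Y x < ⨅ i : Fin N, Y (xs i) } }
      ≤ Measure.pi (fun _ : Fin N => μ)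
          (Set.pi Set.univ (fun _ : Fin N => {x : Ω | q < Y x})) := measure_mono hincl
    _ = ∏ _i : Fin N, μ {x : Ω | q < Y x} := Measure.pi_pi _ _
    _ = (μ {x : Ω | q < Y x}) ^ N := by simp
    _ ≤ (ENNReal.ofReal (1 - p)) ^ N := pow_le_pow_left' htail N
    _ = ENNReal.ofReal ((1 - p) ^ N) := (ENNReal.ofReal_pow (by linarith) N).symm
lemma neg_iInf_eq {N : ℕ} (hN : 1 ≤ N) (f : Fin N → ℝ) :
    (⨅ i : Fin N, -f i) = -(⨆ i : Fin N, f i) := by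
  haveI : Nonempty (Fin N) := ⟨⟨0, hN⟩⟩
  apply le_antisymm
  · rw [le_neg]
    refine ciSup_le fun i => ?_
    rw [le_neg]
    exact ciInf_le (Finite.bddBelow_range _) i
  · refine le_ciInf fun i => ?_
    rw [neg_le_neg_iff]
    exact le_ciSup (Finite.bddAbove_range _) i

/-- Two-sided scenario bound: the sampled interval hull of a scalar quantity fails to
ε-cover its distribution with probability at most `2·(1 - ε/2)^N`. -/
theorem scenario_two_sided_interval_bound
    {Ω : Type*} [MeasurableSpace Ω] (μ : Measure Ω) [IsProbabilityMeasure μ]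
    (Y : Ω → ℝ) (hY : Measurable Y)
    (ε : ℝ) (hε : ε ∈ Set.Ioo (0 : ℝ) 1) (N : ℕ) (hN : 1 ≤ N) :
    Measure.pi (fun _ : Fin N => μ)
      { xs : Fin N → Ω |
        ENNReal.ofReal ε <
          μ { x : Ω | Y x ∉ Set.Icc (⨅ i : Fin N, Y (xs i)) (⨆ i : Fin N, Y (xs i)) } } ≤
    ENNReal.ofReal (2 * (1 - ε / 2) ^ N) := by
  obtain ⟨hε0, hε1⟩ := hε
  have hp0 : (0:ℝ) < ε / 2 := by linarith
  have hp1 : ε / 2 < 1 := by linarith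
  have hA := aux_one_sided μ Y hY (ε / 2) hp0 hp1 N hN
  have hB := aux_one_sided μ (fun x => -Y x) hY.neg (ε / 2) hp0 hp1 N hN
  -- rewrite the set in hB
  have hBset : { xs : Fin N → Ω |
      ENNReal.ofReal (ε / 2) < μ { x : Ω | -Y x < ⨅ i : Fin N, -Y (xs i) } } =
      { xs : Fin N → Ω |
      ENNReal.ofReal (ε / 2) < μ { x : Ω | (⨆ i : Fin N, Y (xs i)) < Y x } } := by
    ext xs
    simp only [Set.mem_setOf_eq, neg_iInf_eq hN (fun i => Y (xs i)), neg_lt_neg_iff]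
  rw [hBset] at hB
  set A : Set (Fin N → Ω) := { xs : Fin N → Ω |
      ENNReal.ofReal (ε / 2) < μ { x : Ω | Y x < ⨅ i : Fin N, Y (xs i) } } with hAdef
  set B : Set (Fin N → Ω) := { xs : Fin N → Ω |
      ENNReal.ofReal (ε / 2) < μ { x : Ω | (⨆ i : Fin N, Y (xs i)) < Y x } } with hBdef
  have hsub : { xs : Fin N → Ω |
        ENNReal.ofReal ε <
          μ { x : Ω | Y x ∉ Set.Icc (⨅ i : Fin N, Y (xs i)) (⨆ i : Fin N, Y (xs i)) } }
      ⊆ A ∪ B := by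
    intro xs hxs
    simp only [Set.mem_setOf_eq] at hxs
    set m : ℝ := ⨅ i : Fin N, Y (xs i)
    set M : ℝ := ⨆ i : Fin N, Y (xs i)
    by_contra hcon
    simp only [Set.mem_union, hAdef, hBdef, Set.mem_setOf_eq, not_or, not_lt] at hcon
    obtain ⟨hA', hB'⟩ := hcon
    have hsplit : { x : Ω | Y x ∉ Set.Icc m M } ⊆
        { x : Ω | Y x < m } ∪ { x : Ω | M < Y x } := by
      intro x hx
      simp only [Set.mem_setOf_eq, Set.mem_Icc, not_and_or, not_le] at hx
      simpa [Set.mem_union, Set.mem_setOf_eq] using hx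
    have : ENNReal.ofReal ε < ENNReal.ofReal ε := by
      calc ENNReal.ofReal ε < μ { x : Ω | Y x ∉ Set.Icc m M } := hxs
        _ ≤ μ ({ x : Ω | Y x < m } ∪ { x : Ω | M < Y x }) := measure_mono hsplit
        _ ≤ μ { x : Ω | Y x < m } + μ { x : Ω | M < Y x } := measure_union_le _ _
        _ ≤ ENNReal.ofReal (ε / 2) + ENNReal.ofReal (ε / 2) := add_le_add hA' hB'
        _ = ENNReal.ofReal ε := by
            rw [← ENNReal.ofReal_add (by linarith) (by linarith)]
            ring_nf
    exact lt_irrefl _ this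
  have hpow : (0:ℝ) ≤ (1 - ε / 2) ^ N := pow_nonneg (by linarith) N
  calc Measure.pi (fun _ : Fin N => μ)
        { xs : Fin N → Ω |
          ENNReal.ofReal ε <
            μ { x : Ω | Y x ∉ Set.Icc (⨅ i : Fin N, Y (xs i)) (⨆ i : Fin N, Y (xs i)) } }
      ≤ Measure.pi (fun _ : Fin N => μ) (A ∪ B) := measure_mono hsub
    _ ≤ Measure.pi (fun _ : Fin N => μ) A + Measure.pi (fun _ : Fin N => μ) B :=
        measure_union_le _ _
    _ ≤ ENNReal.ofReal ((1 - ε / 2) ^ N) + ENNReal.ofReal ((1 - ε / 2) ^ N) := add_le_add hA hB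
    _ = ENNReal.ofReal (2 * (1 - ε / 2) ^ N) := by
        rw [← ENNReal.ofReal_add hpow hpow]; ring_nf
end

section
/- Let (Ω, μ) be a probability space, let n ≥ 1 be a natural number, let Φ : Ω → ℝⁿ be measurable, let ε ∈ (0,1), and let N ≥ 1 be a natural number. Then, with respect to the N-fold product measure μ^⊗N on samples (x₁, …, x_N), the probability of the event that μ{ x ∈ Ω : Φ(x) ∉ ∏_{j=1}^{n} [min_{1≤i≤N} Φ_j(x_i), max_{1≤i≤N} Φ_j(x_i)] } > ε is at most 2n·(1 − ε/(2n))^N. (Coordinatewise union bound for the sampled interval hull in ℝⁿ: the hull has 2n one-sided faces, each of which fails with probability at most (1 − ε/(2n))^N.) -/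
open MeasureTheory Real Filter Set ENNReal Topology

theorem negiInf (N : ℕ) [NeZero N] (f : Fin N → ℝ) : ⨅ i, -f i = -⨆ i, f i := by
  have hb : BddAbove (Set.range f) := Set.Finite.bddAbove (Set.finite_range f)
  have hb2 : BddBelow (Set.range fun i => -f i) := Set.Finite.bddBelow (Set.finite_range _)
  apply le_antisymm
  · rw [le_neg]
    apply ciSup_le
    intro i
    rw [le_neg]
    exact ciInf_le hb2 i
  · apply le_ciInf
    intro i
    exact neg_le_neg (le_ciSup hb i)

lemma face_bound {Ω : Type*} [MeasurableSpace Ω] (μ : Measure Ω) [IsProbabilityMeasure μ]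
    (g : Ω → ℝ) (hg : Measurable g) (δ : ℝ) (hδ0 : 0 < δ) (hδ1 : δ < 1)
    (N : ℕ) (hN : 1 ≤ N) :
    Measure.pi (fun _ : Fin N => μ)
      {xs : Fin N → Ω | ENNReal.ofReal δ < μ {x | g x < ⨅ i, g (xs i)}} ≤
    ENNReal.ofReal ((1 - δ) ^ N) := by
  set δ' : ℝ≥0∞ := ENNReal.ofReal δ with hδ'
  have hδ'0 : 0 < δ' := ENNReal.ofReal_pos.2 hδ0
  have hδ'1 : δ' < 1 := ENNReal.ofReal_lt_one.2 hδ1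
  set S : Set ℝ := {t | δ' ≤ μ {x | g x ≤ t}} with hS
  -- S nonempty
  have hSne : S.Nonempty := by
    have hmono : Monotone (fun m : ℕ => {x | g x ≤ (m : ℝ)}) := by
      intro a b hab
      apply Set.setOf_subset_setOf.2
      intro x hx
      exact le_trans hx (by exact_mod_cast hab)
    have hU : (⋃ m : ℕ, {x | g x ≤ (m : ℝ)}) = Set.univ := by
      ext x
      simp only [Set.mem_iUnion, Set.mem_setOf_eq, Set.mem_univ, iff_true]
      exact exists_nat_ge (g x)
    have h1 : Tendsto (fun m : ℕ => μ {x | g x ≤ (m : ℝ)}) atTop (𝓝 (μ Set.univ)) := by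
      have := tendsto_measure_iUnion_atTop (μ := μ) hmono
      rw [hU] at this
      exact this
    rw [measure_univ] at h1
    obtain ⟨m, hm⟩ := (h1.eventually (eventually_gt_nhds hδ'1)).exists
    exact ⟨m, hm.le⟩
  -- S bounded below
  have hbdd : BddBelow S := by
    have hanti : Antitone (fun m : ℕ => {x | g x ≤ -(m : ℝ)}) := by
      intro a b hab
      apply Set.setOf_subset_setOf.2
      intro x hx
      have : (a : ℝ) ≤ (b : ℝ) := by exact_mod_cast hab
      linarith
    have hI : (⋂ m : ℕ, {x | g x ≤ -(m : ℝ)}) = (∅ : Set Ω) := by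
      ext x
      simp only [Set.mem_iInter, Set.mem_setOf_eq, Set.mem_empty_iff_false, iff_false, not_forall]
      obtain ⟨m, hm⟩ := exists_nat_gt (-g x)
      exact ⟨m, by linarith⟩
    have h2 : Tendsto (fun m : ℕ => μ {x | g x ≤ -(m : ℝ)}) atTop (𝓝 (μ (⋂ m : ℕ, {x | g x ≤ -(m : ℝ)}))) :=
      tendsto_measure_iInter_atTop (s := fun m : ℕ => {x | g x ≤ -(m : ℝ)})
        (fun m => (measurableSet_le hg measurable_const).nullMeasurableSet) hanti
        ⟨0, measure_ne_top μ _⟩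
    rw [hI, measure_empty] at h2
    obtain ⟨m, hm⟩ := (h2.eventually (eventually_lt_nhds hδ'0)).exists
    refine ⟨-(m : ℝ), fun t ht => ?_⟩
    by_contra hc
    push_neg at hc
    exact absurd (le_trans ht (measure_mono (fun x hx => le_trans hx hc.le))) (not_le.2 hm)
  set q : ℝ := sInf S with hq
  have hSup : ∀ t, q < t → δ' ≤ μ {x | g x ≤ t} := by
    intro t ht
    obtain ⟨s, hsS, hst⟩ := exists_lt_of_csInf_lt hSne ht
    exact le_trans hsS (measure_mono (fun x hx => le_trans hx hst.le))
  -- key property 1: δ' ≤ μ {g ≤ q}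
  have hq1 : δ' ≤ μ {x | g x ≤ q} := by
    have hanti : Antitone (fun m : ℕ => {x | g x ≤ q + 1 / ((m : ℝ) + 1)}) := by
      intro a b hab
      apply Set.setOf_subset_setOf.2
      intro x hx
      have hcast : (a : ℝ) ≤ (b : ℝ) := by exact_mod_cast hab
      refine le_trans hx (by gcongr)
    have hI : (⋂ m : ℕ, {x | g x ≤ q + 1 / ((m : ℝ) + 1)}) = {x | g x ≤ q} := by
      ext x
      simp only [Set.mem_iInter, Set.mem_setOf_eq]
      constructor
      · intro h
        have htend : Tendsto (fun m : ℕ => q + 1 / ((m : ℝ) + 1)) atTop (𝓝 q) := by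
          have := tendsto_one_div_add_atTop_nhds_zero_nat (𝕜 := ℝ)
          simpa using tendsto_const_nhds.add this
        exact ge_of_tendsto' htend h
      · intro h m
        have : (0:ℝ) < 1 / ((m : ℝ) + 1) := by positivity
        linarith
    have h3 : Tendsto (fun m : ℕ => μ {x | g x ≤ q + 1 / ((m : ℝ) + 1)}) atTop
        (𝓝 (μ {x | g x ≤ q})) := by
      have := tendsto_measure_iInter_atTop (μ := μ)
        (s := fun m : ℕ => {x | g x ≤ q + 1 / ((m : ℝ) + 1)})
        (fun m => (measurableSet_le hg measurable_const).nullMeasurableSet) hanti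
        ⟨0, measure_ne_top μ _⟩
      rw [hI] at this
      exact this
    refine ge_of_tendsto' h3 (fun m => hSup _ (lt_add_of_pos_right q (by positivity)))
  -- key property 2: μ {g < q} ≤ δ'
  have hq2 : μ {x | g x < q} ≤ δ' := by
    have hmono : Monotone (fun m : ℕ => {x | g x ≤ q - 1 / ((m : ℝ) + 1)}) := by
      intro a b hab
      apply Set.setOf_subset_setOf.2
      intro x hx
      have hcast : (a : ℝ) ≤ (b : ℝ) := by exact_mod_cast hab
      refine le_trans hx (by gcongr)
    have hU : (⋃ m : ℕ, {x | g x ≤ q - 1 / ((m : ℝ) + 1)}) = {x | g x < q} := by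
      ext x
      simp only [Set.mem_iUnion, Set.mem_setOf_eq]
      constructor
      · rintro ⟨m, hm⟩
        have : (0:ℝ) < 1 / ((m : ℝ) + 1) := by positivity
        linarith
      · intro h
        obtain ⟨m, hm⟩ := exists_nat_one_div_lt (show (0:ℝ) < q - g x by linarith)
        exact ⟨m, by linarith⟩
    have h4 : Tendsto (fun m : ℕ => μ {x | g x ≤ q - 1 / ((m : ℝ) + 1)}) atTop
        (𝓝 (μ {x | g x < q})) := by
      have := tendsto_measure_iUnion_atTop (μ := μ) hmono
      rw [hU] at this
      exact this
    refine le_of_tendsto' h4 (fun m => ?_)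
    by_contra hc
    push_neg at hc
    have : q - 1 / ((m : ℝ) + 1) ∈ S := hc.le
    have := csInf_le hbdd this
    have hpos : (0:ℝ) < 1 / ((m : ℝ) + 1) := by positivity
    linarith [hq ▸ this]
  -- the inclusion
  have hsub : {xs : Fin N → Ω | δ' < μ {x | g x < ⨅ i, g (xs i)}} ⊆
      Set.pi Set.univ (fun _ : Fin N => {x | q < g x}) := by
    intro xs hxs
    simp only [Set.mem_setOf_eq] at hxs
    have hinf : q < ⨅ i, g (xs i) := by
      by_contra hc
      push_neg at hc
      have : μ {x | g x < ⨅ i, g (xs i)} ≤ μ {x | g x < q} :=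
        measure_mono (fun x hx => lt_of_lt_of_le hx hc)
      exact absurd (lt_of_lt_of_le hxs (le_trans this hq2)) (lt_irrefl _)
    intro i _
    have hbb : BddBelow (Set.range fun i => g (xs i)) := Set.Finite.bddBelow (Set.finite_range _)
    exact lt_of_lt_of_le hinf (ciInf_le hbb i)
  -- compute the measure of the box
  have hA : MeasurableSet {x | q < g x} := measurableSet_lt measurable_const hg
  calc Measure.pi (fun _ : Fin N => μ) {xs : Fin N → Ω | δ' < μ {x | g x < ⨅ i, g (xs i)}}
      ≤ Measure.pi (fun _ : Fin N => μ) (Set.pi Set.univ (fun _ : Fin N => {x | q < g x})) :=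
        measure_mono hsub
    _ = ∏ _i : Fin N, μ {x | q < g x} := Measure.pi_pi _ _
    _ = (μ {x | q < g x}) ^ N := by rw [Finset.prod_const, Finset.card_univ, Fintype.card_fin]
    _ ≤ (ENNReal.ofReal (1 - δ)) ^ N := by
        gcongr
        have hcompl : μ {x | q < g x} = 1 - μ {x | g x ≤ q} := by
          have : {x | q < g x} = {x | g x ≤ q}ᶜ := by ext x; simp [not_le]
          rw [this, measure_compl (measurableSet_le hg measurable_const) (measure_ne_top μ _), measure_univ]
        rw [hcompl]
        calc (1 : ℝ≥0∞) - μ {x | g x ≤ q} ≤ 1 - δ' := tsub_le_tsub_left hq1 1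
          _ = ENNReal.ofReal (1 - δ) := by
              rw [← ENNReal.ofReal_one, ← ENNReal.ofReal_sub _ hδ0.le]
    _ = ENNReal.ofReal ((1 - δ) ^ N) := by
        rw [ENNReal.ofReal_pow (by linarith)]

/-- Coordinatewise union bound for the sampled interval hull in ℝⁿ: the hull has 2n
one-sided faces, each of which fails with probability at most `(1 - ε/(2n))^N`. -/
theorem scenario_interval_hull_union_bound
    {Ω : Type*} [MeasurableSpace Ω] (μ : Measure Ω) [IsProbabilityMeasure μ]
    (n : ℕ) (hn : 1 ≤ n) (Φ : Ω → (Fin n → ℝ)) (hΦ : Measurable Φ)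
    (ε : ℝ) (hε : ε ∈ Set.Ioo (0 : ℝ) 1) (N : ℕ) (hN : 1 ≤ N) :
    Measure.pi (fun _ : Fin N => μ)
      { xs : Fin N → Ω |
        ENNReal.ofReal ε <
          μ { x : Ω | ¬ ∀ j : Fin n,
            Φ x j ∈ Set.Icc (⨅ i : Fin N, Φ (xs i) j) (⨆ i : Fin N, Φ (xs i) j) } } ≤
    ENNReal.ofReal (2 * n * (1 - ε / (2 * n)) ^ N) := by
  obtain ⟨hε0, hε1⟩ := hε
  haveI : NeZero N := ⟨by omega⟩
  have hn0 : (0:ℝ) < n := by exact_mod_cast hn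
  set δ : ℝ := ε / (2 * n) with hδ
  have hδ0 : 0 < δ := by positivity
  have hδ1 : δ < 1 := by
    rw [hδ, div_lt_one (by positivity)]
    have h1n : (1:ℝ) ≤ n := by exact_mod_cast hn
    linarith
  have hΦj : ∀ j : Fin n, Measurable fun x => Φ x j :=
    fun j => (measurable_pi_apply j).comp hΦ
  have hsub : { xs : Fin N → Ω |
        ENNReal.ofReal ε <
          μ { x : Ω | ¬ ∀ j : Fin n,
            Φ x j ∈ Set.Icc (⨅ i : Fin N, Φ (xs i) j) (⨆ i : Fin N, Φ (xs i) j) } } ⊆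
      ⋃ j : Fin n,
        ({xs : Fin N → Ω | ENNReal.ofReal δ < μ {x | Φ x j < ⨅ i, Φ (xs i) j}} ∪
         {xs : Fin N → Ω | ENNReal.ofReal δ < μ {x | ⨆ i, Φ (xs i) j < Φ x j}}) := by
    intro xs hxs
    simp only [Set.mem_setOf_eq] at hxs
    by_contra hc
    simp only [Set.mem_iUnion, Set.mem_union, Set.mem_setOf_eq, not_exists, not_or,
      not_lt] at hc
    have hbad : { x : Ω | ¬ ∀ j : Fin n,
          Φ x j ∈ Set.Icc (⨅ i : Fin N, Φ (xs i) j) (⨆ i : Fin N, Φ (xs i) j) } ⊆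
        ⋃ j : Fin n, ({x | Φ x j < ⨅ i, Φ (xs i) j} ∪ {x | ⨆ i, Φ (xs i) j < Φ x j}) := by
      intro x hx
      simp only [Set.mem_setOf_eq, not_forall] at hx
      obtain ⟨j, hj⟩ := hx
      rw [Set.mem_Icc, not_and_or, not_le, not_le] at hj
      exact Set.mem_iUnion.2 ⟨j, hj⟩
    have h1 : μ { x : Ω | ¬ ∀ j : Fin n,
          Φ x j ∈ Set.Icc (⨅ i : Fin N, Φ (xs i) j) (⨆ i : Fin N, Φ (xs i) j) } ≤
        ∑' j : Fin n, μ ({x | Φ x j < ⨅ i, Φ (xs i) j} ∪ {x | ⨆ i, Φ (xs i) j < Φ x j}) :=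
      le_trans (measure_mono hbad) (measure_iUnion_le _)
    have h2 : (∑' j : Fin n,
          μ ({x | Φ x j < ⨅ i, Φ (xs i) j} ∪ {x | ⨆ i, Φ (xs i) j < Φ x j})) ≤
        ∑ _j : Fin n, (ENNReal.ofReal δ + ENNReal.ofReal δ) := by
      rw [tsum_fintype]
      refine Finset.sum_le_sum (fun j _ => ?_)
      exact le_trans (measure_union_le _ _) (add_le_add (hc j).1 (hc j).2)
    have h3 : (∑ _j : Fin n, (ENNReal.ofReal δ + ENNReal.ofReal δ)) = ENNReal.ofReal ε := by
      rw [Finset.sum_const, Finset.card_univ, Fintype.card_fin, nsmul_eq_mul,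
        ← ENNReal.ofReal_add hδ0.le hδ0.le, ← ENNReal.ofReal_natCast n,
        ← ENNReal.ofReal_mul (Nat.cast_nonneg n)]
      congr 1
      rw [hδ]
      field_simp
      ring
    rw [h3] at h2
    exact absurd (lt_of_lt_of_le hxs (le_trans h1 h2)) (lt_irrefl _)
  have hp : (0:ℝ) ≤ (1 - δ) ^ N := pow_nonneg (by linarith) N
  refine le_trans (measure_mono hsub) (le_trans (measure_iUnion_le _) ?_)
  have h4 : (∑' j : Fin n, Measure.pi (fun _ : Fin N => μ)
        ({xs : Fin N → Ω | ENNReal.ofReal δ < μ {x | Φ x j < ⨅ i, Φ (xs i) j}} ∪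
         {xs : Fin N → Ω | ENNReal.ofReal δ < μ {x | ⨆ i, Φ (xs i) j < Φ x j}})) ≤
      ∑ _j : Fin n, (ENNReal.ofReal ((1 - δ) ^ N) + ENNReal.ofReal ((1 - δ) ^ N)) := by
    rw [tsum_fintype]
    refine Finset.sum_le_sum (fun j _ => ?_)
    refine le_trans (measure_union_le _ _) (add_le_add ?_ ?_)
    · exact face_bound μ (fun x => Φ x j) (hΦj j) δ hδ0 hδ1 N hN
    · have hEq : {xs : Fin N → Ω | ENNReal.ofReal δ < μ {x | ⨆ i, Φ (xs i) j < Φ x j}} =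
          {xs : Fin N → Ω | ENNReal.ofReal δ <
            μ {x | (fun y => -(Φ y j)) x < ⨅ i, (fun y => -(Φ y j)) (xs i)}} := by
        ext xs
        simp only [Set.mem_setOf_eq]
        have hni : (⨅ i, -(Φ (xs i) j)) = -⨆ i, Φ (xs i) j :=
          negiInf N (fun i => Φ (xs i) j)
        have hset : {x | ⨆ i, Φ (xs i) j < Φ x j} =
            {x | (fun y => -(Φ y j)) x < ⨅ i, (fun y => -(Φ y j)) (xs i)} := by
          ext x
          simp only [Set.mem_setOf_eq, hni, neg_lt_neg_iff]
        rw [hset]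
      rw [hEq]
      exact face_bound μ (fun y => -(Φ y j)) ((hΦj j).neg) δ hδ0 hδ1 N hN
  have h5 : (∑ _j : Fin n, (ENNReal.ofReal ((1 - δ) ^ N) + ENNReal.ofReal ((1 - δ) ^ N))) =
      ENNReal.ofReal (2 * n * (1 - δ) ^ N) := by
    rw [Finset.sum_const, Finset.card_univ, Fintype.card_fin, nsmul_eq_mul,
      ← ENNReal.ofReal_add hp hp, ← ENNReal.ofReal_natCast n,
      ← ENNReal.ofReal_mul (Nat.cast_nonneg n)]
    congr 1
    ring
  exact le_trans h4 (le_of_eq h5)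
end

section
/- Let d ≥ 1 be a natural number, let ε, ω ∈ (0,1), and let N be a natural number satisfying N ≥ (1/ε)·(e/(e−1))·(log(1/ω) + d). Then the binomial tail satisfies ∑_{i=0}^{d−1} (N choose i) · ε^i · (1 − ε)^{N−i} ≤ ω. (Sample-complexity inequality behind the scenario-approach bound of Theorem 1: the explicit sample size N forces the probability that fewer than d of N independent ε-Bernoulli trials succeed to be at most ω.) -/
open Real

/-- Sample-complexity inequality behind the scenario-approach bound: the explicit sample
size `N` forces the Binomial(N, ε) lower tail `P(X ≤ d - 1)` to be at most `ω`. -/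
theorem scenario_binomial_tail_bound
    (d : ℕ) (hd : 1 ≤ d) (ε ω : ℝ) (hε : ε ∈ Set.Ioo (0 : ℝ) 1)
    (hω : ω ∈ Set.Ioo (0 : ℝ) 1) (N : ℕ)
    (hN : (N : ℝ) ≥ (1 / ε) * (Real.exp 1 / (Real.exp 1 - 1)) * (Real.log (1 / ω) + d)) :
    ∑ i ∈ Finset.range d, (N.choose i : ℝ) * ε ^ i * (1 - ε) ^ (N - i) ≤ ω := by
  obtain ⟨hε0, hε1⟩ := hε
  obtain ⟨hω0, hω1⟩ := hω
  set e : ℝ := Real.exp 1 with he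
  have he1 : 1 < e := by
    have := Real.exp_one_gt_d9
    rw [he]; linarith
  have he0 : (0 : ℝ) < e := by linarith
  set L : ℝ := Real.log (1 / ω) with hLdef
  have hL0 : 0 < L := Real.log_pos (by rw [one_div]; exact (one_lt_inv₀ hω0).mpr hω1)
  have hLω : L = -Real.log ω := by rw [hLdef, one_div, Real.log_inv]
  -- key consequence of hN
  have hNe : e * (L + d) ≤ (N : ℝ) * ε * (e - 1) := by
    have hpos : (0 : ℝ) ≤ ε * (e - 1) := by nlinarith
    have h := mul_le_mul_of_nonneg_right hN hpos
    have hε' : ε ≠ 0 := ne_of_gt hε0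
    have he' : e - 1 ≠ 0 := by linarith
    have heq : (1 / ε) * (e / (e - 1)) * (L + d) * (ε * (e - 1)) = e * (L + d) := by
      field_simp
    nlinarith [h, heq]
  have hdN : d ≤ N := by
    have h1 : (1:ℝ) ≤ 1 / ε := by rw [le_div_iff₀ hε0]; linarith
    have h2 : (1:ℝ) ≤ e / (e - 1) := by rw [le_div_iff₀ (by linarith : (0:ℝ) < e - 1)]; linarith
    have h3 : (d:ℝ) ≤ (N:ℝ) := by
      nlinarith [hNe, hL0, mul_pos he0 hL0, he0,
        mul_nonneg (mul_nonneg (Nat.cast_nonneg (α := ℝ) N)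
          (by linarith : (0:ℝ) ≤ 1 - ε)) (by linarith : (0:ℝ) ≤ e - 1)]
    exact_mod_cast h3
  have h1ε : (0:ℝ) < 1 - ε := by linarith
  -- Step 1: per-term bound and extension of the sum
  have step1 : ∑ i ∈ Finset.range d, (N.choose i : ℝ) * ε ^ i * (1 - ε) ^ (N - i)
      ≤ e ^ (d - 1) * ∑ i ∈ Finset.range (N + 1),
          (N.choose i : ℝ) * (ε / e) ^ i * (1 - ε) ^ (N - i) := by
    calc ∑ i ∈ Finset.range d, (N.choose i : ℝ) * ε ^ i * (1 - ε) ^ (N - i)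
        ≤ ∑ i ∈ Finset.range d,
            e ^ (d - 1) * ((N.choose i : ℝ) * (ε / e) ^ i * (1 - ε) ^ (N - i)) := by
          apply Finset.sum_le_sum
          intro i hi
          have hi' : i ≤ d - 1 := Nat.le_sub_one_of_lt (Finset.mem_range.mp hi)
          have hpow : e ^ i ≤ e ^ (d - 1) := pow_le_pow_right₀ he1.le hi'
          have hnn : 0 ≤ (N.choose i : ℝ) * (ε / e) ^ i * (1 - ε) ^ (N - i) := by positivity
          have heq : (N.choose i : ℝ) * ε ^ i * (1 - ε) ^ (N - i)
              = ((N.choose i : ℝ) * (ε / e) ^ i * (1 - ε) ^ (N - i)) * e ^ i := by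
            rw [div_pow]
            field_simp
          rw [heq]
          calc ((N.choose i : ℝ) * (ε / e) ^ i * (1 - ε) ^ (N - i)) * e ^ i
              ≤ ((N.choose i : ℝ) * (ε / e) ^ i * (1 - ε) ^ (N - i)) * e ^ (d - 1) :=
                mul_le_mul_of_nonneg_left hpow hnn
            _ = e ^ (d - 1) * ((N.choose i : ℝ) * (ε / e) ^ i * (1 - ε) ^ (N - i)) :=
                mul_comm _ _
      _ = e ^ (d - 1) * ∑ i ∈ Finset.range d,
            (N.choose i : ℝ) * (ε / e) ^ i * (1 - ε) ^ (N - i) := by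
          rw [Finset.mul_sum]
      _ ≤ e ^ (d - 1) * ∑ i ∈ Finset.range (N + 1),
            (N.choose i : ℝ) * (ε / e) ^ i * (1 - ε) ^ (N - i) := by
          apply mul_le_mul_of_nonneg_left _ (by positivity)
          apply Finset.sum_le_sum_of_subset_of_nonneg
          · exact Finset.range_subset_range.mpr (by omega)
          · intro i _ _
            positivity
  -- Step 2: binomial theorem
  have step2 : ∑ i ∈ Finset.range (N + 1),
      (N.choose i : ℝ) * (ε / e) ^ i * (1 - ε) ^ (N - i) = (ε / e + (1 - ε)) ^ N := by
    rw [add_pow]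
    apply Finset.sum_congr rfl
    intro i _
    ring
  -- Step 3: 1 + x ≤ exp x
  have hc0 : (0:ℝ) ≤ ε / e + (1 - ε) := by positivity
  have hc : ε / e + (1 - ε) ≤ Real.exp (ε / e - ε) := by
    have := Real.add_one_le_exp (ε / e - ε)
    linarith
  have step3 : (ε / e + (1 - ε)) ^ N ≤ Real.exp ((N : ℝ) * (ε / e - ε)) := by
    calc (ε / e + (1 - ε)) ^ N ≤ Real.exp (ε / e - ε) ^ N := pow_le_pow_left₀ hc0 hc N
      _ = Real.exp ((N : ℝ) * (ε / e - ε)) := (Real.exp_nat_mul _ N).symm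
  -- Step 4: final exponent arithmetic
  have hdcast : ((d - 1 : ℕ) : ℝ) = (d : ℝ) - 1 := by
    rw [Nat.cast_sub hd, Nat.cast_one]
  have step4 : e ^ (d - 1) * Real.exp ((N : ℝ) * (ε / e - ε)) ≤ ω := by
    have hexp : e ^ (d - 1) = Real.exp ((d : ℝ) - 1) := by
      rw [he, ← Real.exp_nat_mul, hdcast, mul_one]
    rw [hexp, ← Real.exp_add]
    rw [← Real.exp_log hω0]
    apply Real.exp_le_exp.mpr
    have harith : (N : ℝ) * (ε / e - ε) = -(((N : ℝ) * ε * (e - 1)) / e) := by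
      field_simp
      ring
    rw [harith]
    have h4 : L + (d : ℝ) ≤ ((N : ℝ) * ε * (e - 1)) / e := by
      rw [le_div_iff₀ he0]
      nlinarith [hNe]
    have := hLω
    linarith
  calc ∑ i ∈ Finset.range d, (N.choose i : ℝ) * ε ^ i * (1 - ε) ^ (N - i)
      ≤ e ^ (d - 1) * ∑ i ∈ Finset.range (N + 1),
          (N.choose i : ℝ) * (ε / e) ^ i * (1 - ε) ^ (N - i) := step1
    _ = e ^ (d - 1) * (ε / e + (1 - ε)) ^ N := by rw [step2]
    _ ≤ e ^ (d - 1) * Real.exp ((N : ℝ) * (ε / e - ε)) :=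
        mul_le_mul_of_nonneg_left step3 (by positivity)
    _ ≤ ω := step4
end
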